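/- arXiv:2010.12442 — 8 statements merged into one kernel-verified Lean document; each statement's English description precedes it below -/
import Mathlib

section
/- The dipole v_{xy}, defined as the unique element of the energy Hilbert space H_E satisfying ⟨v_{xy}, u⟩_{H_E} = u(x) − u(y) for all u ∈ H_E, satisfies the pointwise equation Δ v_{xy} = δ_x − δ_y. -/
open scoped BigOperators

/-- Energy form `E(u,v) = (1/2) Σ_{x,y} c_{xy}(u(x)-u(y))(v(x)-v(y))`. -/
noncomputable def energy {V : Type*} (c : V → V → ℝ) (u v : V → ℝ) : ℝ :=
  (1 / 2) * ∑' p : V × V, c p.1 p.2 * (u p.1 - u p.2) * (v p.1 - v p.2)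

/-- `u` has finite energy. -/
def FiniteEnergy {V : Type*} (c : V → V → ℝ) (u : V → ℝ) : Prop :=
  Summable fun p : V × V => c p.1 p.2 * (u p.1 - u p.2) * (u p.1 - u p.2)

/-- Graph Laplacian `(Δu)(x) = Σ_y c_{xy}(u(x)-u(y))`. -/
noncomputable def lap {V : Type*} (c : V → V → ℝ) (u : V → ℝ) (x : V) : ℝ :=
  ∑' y, c x y * (u x - u y)

/-- Total conductance `c(x) = Σ_y c_{xy}`. -/
noncomputable def cTot {V : Type*} (c : V → V → ℝ) (x : V) : ℝ := ∑' y, c x y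

/-- Dirac delta at `x`. -/
noncomputable def delta {V : Type*} [DecidableEq V] (x : V) : V → ℝ :=
  fun z => if z = x then 1 else 0

/-- Connectedness: any two vertices are joined by a finite path of positive-conductance edges. -/
def GraphConnected {V : Type*} (c : V → V → ℝ) : Prop :=
  ∀ x y : V, ∃ (n : ℕ) (p : ℕ → V), p 0 = x ∧ p n = y ∧ ∀ i < n, 0 < c (p i) (p (i + 1))

/-- the dipole `v_{xy}`, characterized by
`⟨v_{xy}, u⟩_{H_E} = u(x) - u(y)` for all finite-energy `u`, satisfies
`Δ v_{xy} = δ_x - δ_y` pointwise. -/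
theorem dipole_laplacian {V : Type*} [Countable V] [DecidableEq V] (c : V → V → ℝ)
    (hsym : ∀ x y, c x y = c y x) (hnn : ∀ x y, 0 ≤ c x y)
    (hloop : ∀ x, c x x = 0)
    (hloc : ∀ x, (Function.support (c x)).Finite)
    (hconn : GraphConnected c)
    (x y : V) (hxy : x ≠ y) (v : V → ℝ) (hv : FiniteEnergy c v)
    (hrep : ∀ u : V → ℝ, FiniteEnergy c u → energy c v u = u x - u y) :
    ∀ z, lap c v z = delta x z - delta y z := by
  intro z
  classical
  set S : Finset V := (hloc z).toFinset with hS
  have hmemS : ∀ w, w ∈ S ↔ c z w ≠ 0 := by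
    intro w; simp [hS, Set.Finite.mem_toFinset, Function.mem_support]
  have hzS : z ∉ S := by simp [hmemS, hloop z]
  set T : Finset (V × V) := ({z} : Finset V) ×ˢ S ∪ S ×ˢ ({z} : Finset V) with hT
  have hvanish : ∀ (w : V → ℝ) (p : V × V), p ∉ T →
      c p.1 p.2 * (w p.1 - w p.2) * (delta z p.1 - delta z p.2) = 0 := by
    intro w p hp
    simp only [hT, Finset.mem_union, Finset.mem_product, Finset.mem_singleton, not_or,
      not_and] at hp
    by_cases h1 : p.1 = z
    · have h2 : p.2 ∉ S := hp.1 h1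
      have hc : c p.1 p.2 = 0 := by
        rw [h1]; exact not_not.mp (fun h => h2 ((hmemS p.2).mpr h))
      simp [hc]
    · by_cases h2 : p.2 = z
      · have h1' : p.1 ∉ S := fun h => hp.2 h h2
        have hc : c p.1 p.2 = 0 := by
          rw [h2, hsym]; exact not_not.mp (fun h => h1' ((hmemS p.1).mpr h))
        simp [hc]
      · simp [delta, h1, h2]
  have hdz : FiniteEnergy c (delta z) := by
    apply summable_of_ne_finset_zero (s := T)
    intro p hp
    exact hvanish (delta z) p hp
  have hdisj : Disjoint (({z} : Finset V) ×ˢ S) (S ×ˢ ({z} : Finset V)) := by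
    rw [Finset.disjoint_left]
    intro p h1 h2
    simp only [Finset.mem_product, Finset.mem_singleton] at h1 h2
    exact hzS (h1.1 ▸ h2.1)
  have hmemz : ∀ w ∈ S, w ≠ z := fun w hw he => hzS (he ▸ hw)
  have hE : energy c v (delta z) = lap c v z := by
    have h1 : (∑' p : V × V, c p.1 p.2 * (v p.1 - v p.2) * (delta z p.1 - delta z p.2))
        = ∑ p ∈ T, c p.1 p.2 * (v p.1 - v p.2) * (delta z p.1 - delta z p.2) :=
      tsum_eq_sum (fun p hp => hvanish v p hp)
    have h2 : (∑ p ∈ T, c p.1 p.2 * (v p.1 - v p.2) * (delta z p.1 - delta z p.2))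
        = 2 * ∑ w ∈ S, c z w * (v z - v w) := by
      rw [hT, Finset.sum_union hdisj, Finset.sum_product, Finset.sum_product,
        Finset.sum_singleton]
      have e1 : (∑ w ∈ S, c z w * (v z - v w) * (delta z z - delta z w))
          = ∑ w ∈ S, c z w * (v z - v w) := by
        apply Finset.sum_congr rfl
        intro w hw
        simp [delta, hmemz w hw]
      have e2 : (∑ w ∈ S, ∑ b ∈ ({z} : Finset V), c w b * (v w - v b) * (delta z w - delta z b))
          = ∑ w ∈ S, c z w * (v z - v w) := by
        apply Finset.sum_congr rfl
        intro w hw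
        rw [Finset.sum_singleton, hsym w z]
        simp only [delta, hmemz w hw, if_true, if_false, eq_self_iff_true, if_neg (hmemz w hw)]
        ring
      rw [e1, e2]; ring
    have h3 : lap c v z = ∑ w ∈ S, c z w * (v z - v w) := by
      apply tsum_eq_sum
      intro w hw
      have : c z w = 0 := not_not.mp (fun h => hw ((hmemS w).mpr h))
      simp [this]
    rw [energy, h1, h2, h3]; ring
  have key := hrep (delta z) hdz
  rw [hE] at key
  rw [key]
  simp only [delta]
  by_cases hx : x = z <;> by_cases hy : y = z <;>
    simp [hx, hy, eq_comm]
end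

section
/- For any two distinct vertices x, y in a connected weighted graph and any function u of finite energy, |u(x) − u(y)| ≤ k·‖u‖_{H_E}, where k depends only on x and y (e.g., k² = Σ over a finite path from x to y of the reciprocal conductances along the path). Hence the functional u ↦ u(x) − u(y) is bounded on the energy Hilbert space. -/
open scoped BigOperators

/-- for distinct vertices `x ≠ y`, there is a constant `k`
(depending only on `x, y`) with `|u x - u y| ≤ k * ‖u‖_{H_E}` for every
finite-energy `u`; so the difference functional is bounded on the energy space. -/
theorem difference_functional_bounded {V : Type*} [Countable V] (c : V → V → ℝ)
    (hsym : ∀ x y, c x y = c y x) (hnn : ∀ x y, 0 ≤ c x y)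
    (hloop : ∀ x, c x x = 0)
    (hloc : ∀ x, (Function.support (c x)).Finite)
    (hconn : GraphConnected c)
    (x y : V) (hxy : x ≠ y) :
    ∃ k : ℝ, 0 < k ∧ ∀ u : V → ℝ, FiniteEnergy c u →
      |u x - u y| ≤ k * Real.sqrt (energy c u u) := by
  obtain ⟨n, p, hp0, hpn, hpos⟩ := hconn x y
  refine ⟨Real.sqrt 2 * ∑ i ∈ Finset.range n, 1 / Real.sqrt (c (p i) (p (i + 1))), ?_, ?_⟩
  · have hn : n ≠ 0 := by
      rintro rfl; exact hxy (hp0 ▸ hpn ▸ rfl)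
    have hsum : 0 < ∑ i ∈ Finset.range n, 1 / Real.sqrt (c (p i) (p (i + 1))) := by
      apply Finset.sum_pos
      · intro i hi
        have := hpos i (Finset.mem_range.mp hi)
        positivity
      · exact Finset.nonempty_range_iff.mpr hn
    positivity
  · intro u hu
    set E := energy c u u with hE
    have hterm : ∀ q : V × V, 0 ≤ c q.1 q.2 * (u q.1 - u q.2) * (u q.1 - u q.2) := by
      intro q
      rw [mul_assoc]
      exact mul_nonneg (hnn _ _) (mul_self_nonneg _)
    have hE0 : 0 ≤ E := by
      rw [hE, energy]
      have : 0 ≤ ∑' q : V × V, c q.1 q.2 * (u q.1 - u q.2) * (u q.1 - u q.2) :=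
        tsum_nonneg hterm
      linarith
    -- edge bound
    have edge : ∀ a b : V, 0 < c a b →
        |u a - u b| ≤ Real.sqrt 2 / Real.sqrt (c a b) * Real.sqrt E := by
      intro a b hc
      have h1 : c a b * (u a - u b) * (u a - u b)
          ≤ ∑' q : V × V, c q.1 q.2 * (u q.1 - u q.2) * (u q.1 - u q.2) :=
        Summable.le_tsum hu (a, b) (fun q _ => hterm q)
      have h2 : c a b * (u a - u b) ^ 2 ≤ 2 * E := by
        rw [hE, energy]; nlinarith [h1]
      have h3 : (u a - u b) ^ 2 ≤ 2 * E / c a b := by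
        rw [le_div_iff₀ hc]; nlinarith
      have h4 : |u a - u b| ≤ Real.sqrt (2 * E / c a b) := Real.abs_le_sqrt h3
      calc |u a - u b| ≤ Real.sqrt (2 * E / c a b) := h4
        _ = Real.sqrt 2 / Real.sqrt (c a b) * Real.sqrt E := by
            rw [Real.sqrt_div (by positivity : (0:ℝ) ≤ 2 * E),
              Real.sqrt_mul (by norm_num : (0:ℝ) ≤ 2)]
            ring
    -- telescoping
    have htel : u x - u y = ∑ i ∈ Finset.range n, (u (p i) - u (p (i + 1))) := by
      rw [Finset.sum_range_sub' (fun i => u (p i)), hp0, hpn]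
    calc |u x - u y| = |∑ i ∈ Finset.range n, (u (p i) - u (p (i + 1)))| := by rw [htel]
      _ ≤ ∑ i ∈ Finset.range n, |u (p i) - u (p (i + 1))| := Finset.abs_sum_le_sum_abs _ _
      _ ≤ ∑ i ∈ Finset.range n,
            Real.sqrt 2 / Real.sqrt (c (p i) (p (i + 1))) * Real.sqrt E := by
          apply Finset.sum_le_sum
          intro i hi
          exact edge _ _ (hpos i (Finset.mem_range.mp hi))
      _ = (Real.sqrt 2 * ∑ i ∈ Finset.range n, 1 / Real.sqrt (c (p i) (p (i + 1))))
            * Real.sqrt E := by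
          rw [Finset.mul_sum, Finset.sum_mul]
          exact Finset.sum_congr rfl fun i _ => by ring
end

section
/- The map dist(x,y) = ‖v_{xy}‖²_{H_E}, where v_{xy} is the dipole reproducing the difference u(x) − u(y), defines a metric on the vertex set V (the resistance distance). -/
open scoped BigOperators

section Aux

variable {V : Type*} (c : V → V → ℝ)

lemma RDM.cross_summable (hnn : ∀ x y, 0 ≤ c x y) {u w : V → ℝ}
    (hu : FiniteEnergy c u) (hw : FiniteEnergy c w) :
    Summable fun p : V × V => c p.1 p.2 * (u p.1 - u p.2) * (w p.1 - w p.2) := by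
  apply Summable.of_abs
  refine Summable.of_nonneg_of_le (f := fun p : V × V =>
      (1/2) * (c p.1 p.2 * (u p.1 - u p.2) * (u p.1 - u p.2))
      + (1/2) * (c p.1 p.2 * (w p.1 - w p.2) * (w p.1 - w p.2)))
    (fun p => abs_nonneg _) ?_ ?_
  · intro p
    set a := u p.1 - u p.2
    set b := w p.1 - w p.2
    clear_value a b
    have hc := hnn p.1 p.2
    have habs : |c p.1 p.2 * a * b| = c p.1 p.2 * |a| * |b| := by
      rw [abs_mul, abs_mul, abs_of_nonneg hc]
    rw [habs]
    have h1 : c p.1 p.2 * a * a = c p.1 p.2 * |a| * |a| := by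
      rw [mul_assoc, mul_assoc, abs_mul_abs_self]
    have h2 : c p.1 p.2 * b * b = c p.1 p.2 * |b| * |b| := by
      rw [mul_assoc, mul_assoc, abs_mul_abs_self]
    nlinarith [mul_nonneg hc (mul_self_nonneg (|a| - |b|)), h1, h2]
  · exact (hu.mul_left _).add (hw.mul_left _)

lemma RDM.energy_comm (u w : V → ℝ) : energy c u w = energy c w u := by
  unfold energy
  congr 1
  exact tsum_congr fun p => by ring

lemma RDM.energy_add_left {u w t : V → ℝ}
    (h1 : Summable fun p : V × V => c p.1 p.2 * (u p.1 - u p.2) * (t p.1 - t p.2))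
    (h2 : Summable fun p : V × V => c p.1 p.2 * (w p.1 - w p.2) * (t p.1 - t p.2)) :
    energy c (fun z => u z + w z) t = energy c u t + energy c w t := by
  unfold energy
  rw [← mul_add, ← Summable.tsum_add h1 h2]
  congr 1
  exact tsum_congr fun p => by ring

lemma RDM.energy_sub_left {u w t : V → ℝ}
    (h1 : Summable fun p : V × V => c p.1 p.2 * (u p.1 - u p.2) * (t p.1 - t p.2))
    (h2 : Summable fun p : V × V => c p.1 p.2 * (w p.1 - w p.2) * (t p.1 - t p.2)) :
    energy c (fun z => u z - w z) t = energy c u t - energy c w t := by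
  unfold energy
  rw [← mul_sub, ← Summable.tsum_sub h1 h2]
  congr 1
  exact tsum_congr fun p => by ring

lemma RDM.finiteEnergy_sub (hnn : ∀ x y, 0 ≤ c x y) {u w : V → ℝ}
    (hu : FiniteEnergy c u) (hw : FiniteEnergy c w) :
    FiniteEnergy c (fun z => u z - w z) := by
  unfold FiniteEnergy
  refine Summable.of_nonneg_of_le (f := fun p : V × V =>
      2 * (c p.1 p.2 * (u p.1 - u p.2) * (u p.1 - u p.2))
      + 2 * (c p.1 p.2 * (w p.1 - w p.2) * (w p.1 - w p.2))) ?_ ?_ ?_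
  · intro p
    rw [mul_assoc]
    exact mul_nonneg (hnn _ _) (mul_self_nonneg _)
  · intro p
    have hc := hnn p.1 p.2
    dsimp only
    nlinarith [mul_nonneg hc (sq_nonneg ((u p.1 - u p.2) + (w p.1 - w p.2)))]
  · exact (hu.mul_left _).add (hw.mul_left _)

lemma RDM.finiteEnergy_add (hnn : ∀ x y, 0 ≤ c x y) {u w : V → ℝ}
    (hu : FiniteEnergy c u) (hw : FiniteEnergy c w) :
    FiniteEnergy c (fun z => u z + w z) := by
  unfold FiniteEnergy
  refine Summable.of_nonneg_of_le (f := fun p : V × V =>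
      2 * (c p.1 p.2 * (u p.1 - u p.2) * (u p.1 - u p.2))
      + 2 * (c p.1 p.2 * (w p.1 - w p.2) * (w p.1 - w p.2))) ?_ ?_ ?_
  · intro p
    rw [mul_assoc]
    exact mul_nonneg (hnn _ _) (mul_self_nonneg _)
  · intro p
    have hc := hnn p.1 p.2
    dsimp only
    nlinarith [mul_nonneg hc (sq_nonneg ((u p.1 - u p.2) - (w p.1 - w p.2)))]
  · exact (hu.mul_left _).add (hw.mul_left _)

lemma RDM.term_le_of_contract (hnn : ∀ x y, 0 ≤ c x y) {f g : V → ℝ}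
    (hlip : ∀ s t, |g s - g t| ≤ |f s - f t|) (p : V × V) :
    c p.1 p.2 * (g p.1 - g p.2) * (g p.1 - g p.2) ≤
      c p.1 p.2 * (f p.1 - f p.2) * (f p.1 - f p.2) := by
  have hc := hnn p.1 p.2
  have h1 : (g p.1 - g p.2) * (g p.1 - g p.2) ≤ (f p.1 - f p.2) * (f p.1 - f p.2) := by
    rw [← abs_mul_abs_self (g p.1 - g p.2), ← abs_mul_abs_self (f p.1 - f p.2)]
    exact mul_self_le_mul_self (abs_nonneg _) (hlip p.1 p.2)
  calc c p.1 p.2 * (g p.1 - g p.2) * (g p.1 - g p.2)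
      = c p.1 p.2 * ((g p.1 - g p.2) * (g p.1 - g p.2)) := by ring
    _ ≤ c p.1 p.2 * ((f p.1 - f p.2) * (f p.1 - f p.2)) := by
        exact mul_le_mul_of_nonneg_left h1 hc
    _ = c p.1 p.2 * (f p.1 - f p.2) * (f p.1 - f p.2) := by ring

lemma RDM.finiteEnergy_of_contract (hnn : ∀ x y, 0 ≤ c x y) {f g : V → ℝ}
    (hf : FiniteEnergy c f) (hlip : ∀ s t, |g s - g t| ≤ |f s - f t|) :
    FiniteEnergy c g := by
  unfold FiniteEnergy
  refine Summable.of_nonneg_of_le (f := fun p : V × V =>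
      c p.1 p.2 * (f p.1 - f p.2) * (f p.1 - f p.2)) ?_ ?_ ?_
  · intro p
    rw [mul_assoc]
    exact mul_nonneg (hnn _ _) (mul_self_nonneg _)
  · exact RDM.term_le_of_contract c hnn hlip
  · exact hf

lemma RDM.energy_le_of_contract (hnn : ∀ x y, 0 ≤ c x y) {f g : V → ℝ}
    (hf : FiniteEnergy c f) (hlip : ∀ s t, |g s - g t| ≤ |f s - f t|) :
    energy c g g ≤ energy c f f := by
  unfold energy
  have hg := RDM.finiteEnergy_of_contract c hnn hf hlip
  have := Summable.tsum_le_tsum (RDM.term_le_of_contract c hnn hlip) hg hf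
  linarith

lemma RDM.energy_self_nonneg (hnn : ∀ x y, 0 ≤ c x y) (u : V → ℝ) :
    0 ≤ energy c u u := by
  unfold energy
  have : 0 ≤ ∑' p : V × V, c p.1 p.2 * (u p.1 - u p.2) * (u p.1 - u p.2) := by
    apply tsum_nonneg
    intro p
    rw [mul_assoc]
    exact mul_nonneg (hnn _ _) (mul_self_nonneg _)
  linarith

lemma RDM.edge_const_of_null (hnn : ∀ x y, 0 ≤ c x y) {u : V → ℝ}
    (hu : FiniteEnergy c u) (h0 : energy c u u = 0) :
    ∀ a b, c a b ≠ 0 → u a = u b := by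
  have hterm : ∀ p : V × V, 0 ≤ c p.1 p.2 * (u p.1 - u p.2) * (u p.1 - u p.2) := by
    intro p
    rw [mul_assoc]
    exact mul_nonneg (hnn _ _) (mul_self_nonneg _)
  have hS : ∑' p : V × V, c p.1 p.2 * (u p.1 - u p.2) * (u p.1 - u p.2) = 0 := by
    unfold energy at h0
    linarith
  intro a b hc
  have hle := Summable.le_tsum hu (a, b) (fun j _ => hterm j)
  rw [hS] at hle
  have h2 : c a b * (u a - u b) * (u a - u b) = 0 := le_antisymm hle (hterm (a, b))
  rcases mul_eq_zero.mp h2 with h | h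
  · rcases mul_eq_zero.mp h with h' | h'
    · exact absurd h' hc
    · linarith [sub_eq_zero.mp h']
  · linarith [sub_eq_zero.mp h]

lemma RDM.eq_of_connected {u : V → ℝ} (hedge : ∀ a b, c a b ≠ 0 → u a = u b)
    (hconn : GraphConnected c) (x y : V) : u x = u y := by
  obtain ⟨n, p, h0, hn, hstep⟩ := hconn x y
  have key : ∀ i, i ≤ n → u (p 0) = u (p i) := by
    intro i
    induction i with
    | zero => intro _; rfl
    | succ k ih =>
      intro hk
      exact (ih (by omega)).trans (hedge _ _ (ne_of_gt (hstep k (by omega))))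
  rw [← h0, ← hn]
  exact key n le_rfl

lemma RDM.clamp_lip (A B s t : ℝ) : |min A (max B s) - min A (max B t)| ≤ |s - t| := by
  simp only [min_def, max_def]
  split_ifs <;> cases abs_cases (s - t) <;> rw [abs_le] <;> constructor <;> linarith

/-- Maximum/minimum principle for the dipole. -/
lemma RDM.max_principle (hnn : ∀ x y, 0 ≤ c x y) (hconn : GraphConnected c)
    {a b : V} {f : V → ℝ} (hf : FiniteEnergy c f)
    (hfrep : ∀ u : V → ℝ, FiniteEnergy c u → energy c f u = u a - u b) :
    ∀ s, f b ≤ f s ∧ f s ≤ f a := by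
  have hfa : f b ≤ f a := by
    have := hfrep f hf
    have h2 := RDM.energy_self_nonneg c hnn f
    linarith
  set g : V → ℝ := fun s => min (f a) (max (f b) (f s)) with hgdef
  have hga : g a = f a := by
    simp only [hgdef, max_eq_right hfa, min_self]
  have hgb : g b = f b := by
    simp only [hgdef, max_self, min_eq_right hfa]
  have hlip : ∀ s t, |g s - g t| ≤ |f s - f t| := fun s t => RDM.clamp_lip _ _ _ _
  have hg : FiniteEnergy c g := RDM.finiteEnergy_of_contract c hnn hf hlip
  set h : V → ℝ := fun s => f s - g s with hhdef
  have hh : FiniteEnergy c h := RDM.finiteEnergy_sub c hnn hf hg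
  have hEfh : energy c f h = 0 := by
    rw [hfrep h hh]
    simp [hhdef, hga, hgb]
  -- energy c h f = energy c f f - energy c g f
  have e1 : energy c h f = energy c f f - energy c g f :=
    RDM.energy_sub_left c (RDM.cross_summable c hnn hf hf) (RDM.cross_summable c hnn hg hf)
  have e2 : energy c h f = 0 := by rw [RDM.energy_comm c h f]; exact hEfh
  have e3 : energy c h g = energy c f g - energy c g g :=
    RDM.energy_sub_left c (RDM.cross_summable c hnn hf hg) (RDM.cross_summable c hnn hg hg)
  have e4 : energy c h h = energy c f h - energy c g h :=
    RDM.energy_sub_left c (RDM.cross_summable c hnn hf hh) (RDM.cross_summable c hnn hg hh)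
  have e5 : energy c g h = energy c h g := RDM.energy_comm c g h
  have e6 : energy c f g = energy c g f := RDM.energy_comm c f g
  have hgle : energy c g g ≤ energy c f f := RDM.energy_le_of_contract c hnn hf hlip
  have hhnn : 0 ≤ energy c h h := RDM.energy_self_nonneg c hnn h
  have hEhh : energy c h h = 0 := by linarith
  have hedge := RDM.edge_const_of_null c hnn hh hEhh
  have hconst : ∀ s, h s = h a := fun s => RDM.eq_of_connected c hedge hconn s a
  have hha : h a = 0 := by simp [hhdef, hga]
  have hfg : ∀ s, f s = g s := by
    intro s
    have := hconst s
    rw [hha] at this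
    simpa [hhdef, sub_eq_zero] using this
  intro s
  constructor
  · rw [hfg s]
    exact le_min hfa (le_max_left _ _)
  · rw [hfg s]
    exact min_le_left _ _

end Aux

section Delta
variable {V : Type*} (c : V → V → ℝ)

lemma RDM.delta_finiteEnergy [DecidableEq V] (hsym : ∀ x y, c x y = c y x)
    (hloc : ∀ x, (Function.support (c x)).Finite) (x : V) :
    FiniteEnergy c (delta x) := by
  classical
  unfold FiniteEnergy
  set t := (hloc x).toFinset with ht
  apply summable_of_ne_finset_zero (s := ({x} ×ˢ t) ∪ (t ×ˢ ({x} : Finset V)))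
  intro p hp
  obtain ⟨a, b⟩ := p
  simp only [Finset.mem_union, Finset.mem_product, Finset.mem_singleton,
    Set.Finite.mem_toFinset, Function.mem_support, not_or, not_and, not_not, ht] at hp
  obtain ⟨h1, h2⟩ := hp
  by_cases ha : a = x
  · by_cases hb : b = x
    · simp [delta, ha, hb]
    · have hc : c x b = 0 := h1 ha
      simp [delta, ha, hb, hc]
  · by_cases hb : b = x
    · have hc : c x a = 0 := by
        by_contra hne
        exact (h2 hne) hb
      have hc' : c a x = 0 := by rw [hsym]; exact hc
      simp [delta, ha, hb, hc']
    · simp [delta, ha, hb]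

end Delta

/-- `dist(x,y) = ‖v_{xy}‖²_{H_E}` defines a metric on `V`
(the resistance distance), where `v_{xy}` is the dipole reproducing
`u(x) - u(y)` and `v_{xx} = 0`. -/
theorem resistance_distance_is_metric {V : Type*} [Countable V] (c : V → V → ℝ)
    (hsym : ∀ x y, c x y = c y x) (hnn : ∀ x y, 0 ≤ c x y)
    (hloop : ∀ x, c x x = 0)
    (hloc : ∀ x, (Function.support (c x)).Finite)
    (hconn : GraphConnected c)
    (v : V → V → (V → ℝ))
    (hvfin : ∀ x y, FiniteEnergy c (v x y))
    (hrep : ∀ x y (u : V → ℝ), FiniteEnergy c u →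
      energy c (v x y) u = u x - u y)
    (hvxx : ∀ x, v x x = 0) :
    (∀ x, energy c (v x x) (v x x) = 0) ∧
    (∀ x y, 0 ≤ energy c (v x y) (v x y)) ∧
    (∀ x y, energy c (v x y) (v x y) = energy c (v y x) (v y x)) ∧
    (∀ x y, energy c (v x y) (v x y) = 0 → x = y) ∧
    (∀ x y z, energy c (v x y) (v x y) ≤
      energy c (v x z) (v x z) + energy c (v z y) (v z y)) := by
  classical
  have hd : ∀ x y, energy c (v x y) (v x y) = v x y x - v x y y :=
    fun x y => hrep x y (v x y) (hvfin x y)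
  refine ⟨?_, ?_, ?_, ?_, ?_⟩
  · -- dist(x,x) = 0
    intro x
    rw [hvxx x]
    simp [energy]
  · -- nonneg
    intro x y
    exact RDM.energy_self_nonneg c hnn _
  · -- symmetry
    intro x y
    set w : V → ℝ := fun s => v x y s + v y x s with hwdef
    have hwfin : FiniteEnergy c w := RDM.finiteEnergy_add c hnn (hvfin x y) (hvfin y x)
    have hEw : energy c w w = 0 := by
      have h1 : energy c w w = energy c (v x y) w + energy c (v y x) w :=
        RDM.energy_add_left c (RDM.cross_summable c hnn (hvfin x y) hwfin)
          (RDM.cross_summable c hnn (hvfin y x) hwfin)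
      rw [h1, hrep x y w hwfin, hrep y x w hwfin]
      ring
    have hedge := RDM.edge_const_of_null c hnn hwfin hEw
    have hw : w x = w y := RDM.eq_of_connected c hedge hconn x y
    have hw' : v x y x + v y x x = v x y y + v y x y := hw
    rw [hd x y, hd y x]
    linarith
  · -- definiteness
    intro x y h0
    by_contra hxy
    have hedge := RDM.edge_const_of_null c hnn (hvfin x y) h0
    have hδ : FiniteEnergy c (delta x) := RDM.delta_finiteEnergy c hsym hloc x
    have h1 : energy c (v x y) (delta x) = 1 := by
      rw [hrep x y _ hδ]
      simp [delta, Ne.symm hxy]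
    have h2 : energy c (v x y) (delta x) = 0 := by
      unfold energy
      have hz : ∀ p : V × V,
          c p.1 p.2 * (v x y p.1 - v x y p.2) * (delta x p.1 - delta x p.2) = 0 := by
        intro p
        by_cases hc : c p.1 p.2 = 0
        · rw [hc, zero_mul, zero_mul]
        · rw [hedge p.1 p.2 hc, sub_self, mul_zero, zero_mul]
      rw [tsum_congr hz, tsum_zero, mul_zero]
    rw [h1] at h2
    exact one_ne_zero h2
  · -- triangle inequality
    intro x y z
    -- decomposition v_{xy} ≡ v_{xz} + v_{zy} up to additive constant
    set w : V → ℝ := fun s => v x z s + v z y s with hwdef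
    have hwfin : FiniteEnergy c w := RDM.finiteEnergy_add c hnn (hvfin x z) (hvfin z y)
    set q : V → ℝ := fun s => v x y s - w s with hqdef
    have hqfin : FiniteEnergy c q := RDM.finiteEnergy_sub c hnn (hvfin x y) hwfin
    have hEq : energy c q q = 0 := by
      have h1 : energy c q q = energy c (v x y) q - energy c w q :=
        RDM.energy_sub_left c (RDM.cross_summable c hnn (hvfin x y) hqfin)
          (RDM.cross_summable c hnn hwfin hqfin)
      have h2 : energy c w q = energy c (v x z) q + energy c (v z y) q :=
        RDM.energy_add_left c (RDM.cross_summable c hnn (hvfin x z) hqfin)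
          (RDM.cross_summable c hnn (hvfin z y) hqfin)
      rw [h1, h2, hrep x y q hqfin, hrep x z q hqfin, hrep z y q hqfin]
      ring
    have hedge := RDM.edge_const_of_null c hnn hqfin hEq
    have hq : q x = q y := RDM.eq_of_connected c hedge hconn x y
    have hq' : v x y x - (v x z x + v z y x) = v x y y - (v x z y + v z y y) := hq
    -- maximum principle
    have hmp1 := RDM.max_principle c hnn hconn (hvfin x z) (hrep x z) y
    have hmp2 := RDM.max_principle c hnn hconn (hvfin z y) (hrep z y) x
    rw [hd x y, hd x z, hd z y]
    have h1 : v x z z ≤ v x z y := hmp1.1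
    have h2 : v z y x ≤ v z y z := hmp2.2
    linarith
end

section
/- For every vertex x, the function δ_x satisfies the identity δ_x = c(x)·v_x − Σ_{y~x} c_{xy}·v_y in the energy Hilbert space, where v_z denotes the dipole with respect to a fixed base vertex o; consequently δ_x lies in the closed span of the dipoles {v_z : z ∈ V}. -/
open scoped BigOperators

/-- in the energy Hilbert space, `δ_x = c(x)·v_x - Σ_{y~x} c_{xy} v_y`,
i.e. pointwise up to an additive constant; consequently `δ_x` lies in the
(closed) span of the dipoles `{v_z}`. -/
theorem delta_in_span_of_dipoles {V : Type*} [Countable V] [DecidableEq V] (c : V → V → ℝ)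
    (hsym : ∀ x y, c x y = c y x) (hnn : ∀ x y, 0 ≤ c x y)
    (hloop : ∀ x, c x x = 0)
    (hloc : ∀ x, (Function.support (c x)).Finite)
    (hconn : GraphConnected c)
    (o : V) (v : V → (V → ℝ))
    (hvfin : ∀ z, FiniteEnergy c (v z))
    (hrep : ∀ z (u : V → ℝ), FiniteEnergy c u → energy c (v z) u = u z - u o)
    (x : V) :
    ∃ k : ℝ, ∀ z : V,
      delta x z = cTot c x * v x z - (∑ y ∈ (hloc x).toFinset, c x y * v y z) + k := by
  classical
  set F : Finset V := (hloc x).toFinset with hF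
  have hmemF : ∀ y, y ∈ F ↔ c x y ≠ 0 := by
    intro y; simp [hF, Set.Finite.mem_toFinset, Function.mem_support]
  have hxF : x ∉ F := by
    intro h; exact (hmemF x).1 h (hloop x)
  -- cTot as a finite sum
  have hcTot : cTot c x = ∑ y ∈ F, c x y := by
    refine tsum_eq_sum ?_
    intro y hy
    by_contra h
    exact hy ((hmemF y).2 h)
  -- the relevant finite set of pairs
  set S : Finset (V × V) := ({x} ×ˢ F) ∪ (F ×ˢ {x}) with hS
  have hsupp : ∀ (g : V → ℝ) (p : V × V), p ∉ S →
      c p.1 p.2 * (g p.1 - g p.2) * (delta x p.1 - delta x p.2) = 0 := by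
    intro g p hp
    by_cases h1 : p.1 = x <;> by_cases h2 : p.2 = x
    · simp [delta, h1, h2]
    · -- p.1 = x, p.2 ≠ x : then p.2 ∉ F so c x p.2 = 0
      have : p.2 ∉ F := by
        intro hmem
        exact hp (Finset.mem_union_left _ (by
          rw [Finset.mem_product]; exact ⟨by simp [h1], hmem⟩))
      have hc0 : c p.1 p.2 = 0 := by
        rw [h1]; by_contra h; exact this ((hmemF p.2).2 h)
      simp [hc0]
    · have : p.1 ∉ F := by
        intro hmem
        exact hp (Finset.mem_union_right _ (by
          rw [Finset.mem_product]; exact ⟨hmem, by simp [h2]⟩))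
      have hc0 : c p.1 p.2 = 0 := by
        rw [h2, hsym]; by_contra h; exact this ((hmemF p.1).2 h)
      simp [hc0]
    · simp [delta, h1, h2]
  have hdisj : Disjoint (({x} : Finset V) ×ˢ F) (F ×ˢ ({x} : Finset V)) := by
    rw [Finset.disjoint_left]
    intro p hp hp'
    rw [Finset.mem_product] at hp hp'
    have h1 := Finset.mem_singleton.1 hp.1
    have h2 := hp'.1
    rw [h1] at h2
    exact hxF h2
  -- finite energy of delta
  have hdel : FiniteEnergy c (delta x) := by
    refine summable_of_ne_finset_zero (s := S) ?_
    intro p hp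
    exact hsupp (delta x) p hp
  -- energy against delta is a finite sum
  have henergy : ∀ u : V → ℝ, energy c u (delta x) = ∑ y ∈ F, c x y * (u x - u y) := by
    intro u
    have ht : (∑' p : V × V, c p.1 p.2 * (u p.1 - u p.2) * (delta x p.1 - delta x p.2))
        = ∑ p ∈ S, c p.1 p.2 * (u p.1 - u p.2) * (delta x p.1 - delta x p.2) :=
      tsum_eq_sum (fun p hp => hsupp u p hp)
    have hsum1 : (∑ p ∈ ({x} : Finset V) ×ˢ F,
        c p.1 p.2 * (u p.1 - u p.2) * (delta x p.1 - delta x p.2))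
        = ∑ y ∈ F, c x y * (u x - u y) := by
      rw [Finset.sum_product, Finset.sum_singleton]
      refine Finset.sum_congr rfl fun y hy => ?_
      have hyx : y ≠ x := fun h => hxF (h ▸ hy)
      simp [delta, hyx]
    have hsum2 : (∑ p ∈ F ×ˢ ({x} : Finset V),
        c p.1 p.2 * (u p.1 - u p.2) * (delta x p.1 - delta x p.2))
        = ∑ y ∈ F, c x y * (u x - u y) := by
      rw [Finset.sum_product]
      refine Finset.sum_congr rfl fun y hy => ?_
      rw [Finset.sum_singleton]
      have hyx : y ≠ x := fun h => hxF (h ▸ hy)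
      simp only [delta, if_neg hyx]
      rw [if_pos trivial, hsym y x]; ring
    rw [energy, ht, hS, Finset.sum_union hdisj, hsum1, hsum2]; ring
  -- reproducing property symmetry
  have esymm : ∀ u w : V → ℝ, energy c u w = energy c w u := by
    intro u w
    unfold energy
    congr 1
    exact tsum_congr fun p => by ring
  have hvs : ∀ a b : V, v a b - v a o = v b a - v b o := by
    intro a b
    have h1 := hrep a (v b) (hvfin b)
    have h2 := hrep b (v a) (hvfin a)
    rw [esymm] at h1
    rw [h1] at h2
    linarith
  -- the key identity
  refine ⟨delta x o - (∑ y ∈ F, c x y) * v x o + ∑ y ∈ F, c x y * v y o, fun z => ?_⟩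
  have key : delta x z - delta x o = ∑ y ∈ F, c x y * (v z x - v z y) := by
    have := hrep z (delta x) hdel
    rw [henergy (v z)] at this
    exact this.symm
  have key2 : delta x z - delta x o
      = (∑ y ∈ F, c x y) * (v x z - v x o)
        - ∑ y ∈ F, c x y * v y z + ∑ y ∈ F, c x y * v y o := by
    rw [key]
    rw [Finset.sum_congr rfl (fun y _ => show c x y * (v z x - v z y)
        = c x y * (v x z - v x o) - c x y * v y z + c x y * v y o from by
      have h1 := hvs z x
      have h2 := hvs z y
      linear_combination c x y * h1 - c x y * h2)]
    rw [Finset.sum_add_distrib, Finset.sum_sub_distrib, ← Finset.sum_mul]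
  rw [hcTot]
  linarith [key2]
end

section
/- If h is a harmonic function of finite energy on (G,c), then ‖h‖²_{H_E} = (1/2) Σ_{x∈V} c(x)((P h²)(x) − h²(x)) = −(1/2) Σ_{x∈V} (Δ h²)(x), where h² denotes the pointwise square of h. -/
open scoped BigOperators

/-- The Markov operator `(Pu)(x) = Σ_y (c_{xy}/c(x)) u(y)`. -/
noncomputable def markovOp {V : Type*} (c : V → V → ℝ) (u : V → ℝ) (x : V) : ℝ :=
  ∑' y, (c x y / cTot c x) * u y

/-- if `h` is harmonic of finite energy then
`‖h‖²_{H_E} = (1/2) Σ_x c(x)((P h²)(x) - h²(x)) = -(1/2) Σ_x (Δ h²)(x)`. -/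
theorem harmonic_energy_formulas {V : Type*} [Countable V] (c : V → V → ℝ)
    (hsym : ∀ x y, c x y = c y x) (hnn : ∀ x y, 0 ≤ c x y)
    (hloop : ∀ x, c x x = 0)
    (hloc : ∀ x, (Function.support (c x)).Finite)
    (hconn : GraphConnected c)
    (hpos : ∀ x, 0 < cTot c x)
    (h : V → ℝ) (hharm : ∀ x, lap c h x = 0) (hfe : FiniteEnergy c h)
    (hs1 : Summable (fun x => cTot c x * (markovOp c (fun z => h z ^ 2) x - h x ^ 2)))
    (hs2 : Summable (fun x => lap c (fun z => h z ^ 2) x)) :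
    energy c h h = (1 / 2) * ∑' x, cTot c x * (markovOp c (fun z => h z ^ 2) x - h x ^ 2) ∧
    energy c h h = -(1 / 2) * ∑' x, lap c (fun z => h z ^ 2) x := by
  classical
  have key : ∀ x : V, (∑' y, c x y * (h x - h y) * (h x - h y))
        = - lap c (fun z => h z ^ 2) x ∧
      cTot c x * (markovOp c (fun z => h z ^ 2) x - h x ^ 2)
        = - lap c (fun z => h z ^ 2) x := by
    intro x
    set s := (hloc x).toFinset with hsdef
    have hmem : ∀ y, y ∉ s → c x y = 0 := by
      intro y hy
      by_contra hne
      exact hy (by simpa [hsdef, Function.support] using hne)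
    have t1 : (∑' y, c x y * (h x - h y) * (h x - h y))
        = ∑ y ∈ s, c x y * (h x - h y) * (h x - h y) :=
      tsum_eq_sum (fun y hy => by rw [hmem y hy]; ring)
    have t2 : lap c (fun z => h z ^ 2) x = ∑ y ∈ s, c x y * (h x ^ 2 - h y ^ 2) :=
      tsum_eq_sum (fun y hy => by rw [hmem y hy]; ring)
    have t3 : cTot c x = ∑ y ∈ s, c x y := tsum_eq_sum (fun y hy => hmem y hy)
    have t4 : markovOp c (fun z => h z ^ 2) x = ∑ y ∈ s, (c x y / cTot c x) * h y ^ 2 :=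
      tsum_eq_sum (fun y hy => by rw [hmem y hy]; ring)
    have hharmx : ∑ y ∈ s, c x y * (h x - h y) = 0 := by
      have h0 := hharm x
      rw [lap, tsum_eq_sum (fun y hy => by rw [hmem y hy]; ring)] at h0
      exact h0
    have hcne : cTot c x ≠ 0 := ne_of_gt (hpos x)
    constructor
    · rw [t1, t2]
      have expand : ∀ y ∈ s, c x y * (h x - h y) * (h x - h y)
          = -(c x y * (h x ^ 2 - h y ^ 2)) + 2 * h x * (c x y * (h x - h y)) := by
        intro y _; ring
      rw [Finset.sum_congr rfl expand, Finset.sum_add_distrib, Finset.sum_neg_distrib,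
        ← Finset.mul_sum, hharmx, mul_zero, add_zero]
    · rw [t2, t3, t4]
      have hm : (∑ y ∈ s, c x y) * (∑ y ∈ s, (c x y / cTot c x) * h y ^ 2)
          = ∑ y ∈ s, c x y * h y ^ 2 := by
        rw [← t3, Finset.mul_sum]
        refine Finset.sum_congr rfl (fun y _ => ?_)
        field_simp
      rw [mul_sub, hm, ← Finset.sum_neg_distrib, Finset.sum_mul, ← Finset.sum_sub_distrib]
      exact Finset.sum_congr rfl (fun y _ => by ring)
  have hprod : (∑' p : V × V, c p.1 p.2 * (h p.1 - h p.2) * (h p.1 - h p.2))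
      = ∑' x, ∑' y, c x y * (h x - h y) * (h x - h y) := Summable.tsum_prod hfe
  have hE : energy c h h = (1 / 2) * ∑' x, - lap c (fun z => h z ^ 2) x := by
    rw [energy, hprod]
    congr 1
    exact tsum_congr (fun x => (key x).1)
  constructor
  · rw [hE]
    congr 1
    exact (tsum_congr (fun x => ((key x).2).symm))
  · rw [hE, tsum_neg]
    ring
end

section
/- On the weighted graph with vertex set ℤ, edges between consecutive integers, and conductances c_{n,n+1}, there exists a non-constant harmonic function of finite energy if and only if Σ_{n∈ℤ} 1/c_{n,n+1} < ∞; in that case the space of finite-energy harmonic functions modulo constants is one-dimensional, spanned by u with u(n) − u(n−1) = 1/c_{n−1,n}. -/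
open scoped BigOperators

lemma exists_antideriv (f : ℤ → ℝ) : ∃ u : ℤ → ℝ, ∀ n, u (n+1) - u n = f n := by
  refine ⟨fun n => (∑ k ∈ Finset.Ico (0:ℤ) n, f k) - ∑ k ∈ Finset.Ico n (0:ℤ), f k, ?_⟩
  intro n
  beta_reduce
  rcases le_or_gt 0 n with h | h
  · have e1 : Finset.Ico (0:ℤ) (n+1) = insert n (Finset.Ico 0 n) := by
      ext x; simp only [Finset.mem_Ico, Finset.mem_insert]; omega
    rw [e1, Finset.sum_insert (by simp), Finset.Ico_eq_empty (by omega : ¬ n < 0),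
      Finset.Ico_eq_empty (by omega : ¬ n + 1 < 0)]
    simp
  · have e1 : Finset.Ico n (0:ℤ) = insert n (Finset.Ico (n+1) 0) := by
      ext x; simp only [Finset.mem_Ico, Finset.mem_insert]; omega
    rw [e1, Finset.sum_insert (by simp), Finset.Ico_eq_empty (by omega : ¬ (0:ℤ) < n + 1),
      Finset.Ico_eq_empty (by omega : ¬ (0:ℤ) < n)]
    simp

lemma harm_flux_const (c u : ℤ → ℝ)
    (h : ∀ n, c (n - 1) * (u n - u (n - 1)) = c n * (u (n + 1) - u n)) :
    ∀ n : ℤ, c n * (u (n + 1) - u n) = c 0 * (u 1 - u 0) := by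
  intro n
  induction n using Int.induction_on with
  | zero => norm_num
  | succ k ih =>
    have h1 := h ((k : ℤ) + 1)
    rw [show (k : ℤ) + 1 - 1 = k by ring] at h1
    rw [← h1]; exact ih
  | pred k ih =>
    have h1 := h (-(k : ℤ))
    rw [show (-(k:ℤ)) - 1 + 1 = -(k:ℤ) by ring]
    rw [h1]; exact ih

lemma aux_sq (x b : ℝ) (hx : x ≠ 0) : x * (b * x⁻¹) ^ 2 = b ^ 2 * x⁻¹ := by
  field_simp


/-- on the nearest-neighbor graph on `ℤ` with conductances
`c n` between `n` and `n+1`, a non-constant finite-energy harmonic function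
exists iff `Σ 1/c_n < ∞`; in that case harmonic functions mod constants form a
one-dimensional space, spanned by `u` with `u(n) - u(n-1) = 1/c_{n-1,n}`. -/
theorem Z_harmonic_finite_energy (c : ℤ → ℝ) (hc : ∀ n, 0 < c n) :
    ((∃ u : ℤ → ℝ,
        (∀ n, c (n - 1) * (u n - u (n - 1)) = c n * (u (n + 1) - u n)) ∧
        Summable (fun n : ℤ => c n * (u (n + 1) - u n) ^ 2) ∧
        (∃ m k : ℤ, u m ≠ u k))
      ↔ Summable (fun n : ℤ => (c n)⁻¹)) ∧
    (Summable (fun n : ℤ => (c n)⁻¹) →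
      ∀ u : ℤ → ℝ,
        (∀ n, c (n - 1) * (u n - u (n - 1)) = c n * (u (n + 1) - u n)) →
        Summable (fun n : ℤ => c n * (u (n + 1) - u n) ^ 2) →
        ∃ a : ℝ, ∀ n : ℤ, u (n + 1) - u n = a * (c n)⁻¹) := by
  have hcne : ∀ n, c n ≠ 0 := fun n => (hc n).ne'
  have key : ∀ u : ℤ → ℝ,
      (∀ n, c (n - 1) * (u n - u (n - 1)) = c n * (u (n + 1) - u n)) →
      ∀ n : ℤ, u (n + 1) - u n = (c 0 * (u 1 - u 0)) * (c n)⁻¹ := by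
    intro u hu n
    have h := harm_flux_const c u hu n
    have h2 : (c n)⁻¹ * (c n * (u (n + 1) - u n)) = (c n)⁻¹ * (c 0 * (u 1 - u 0)) := by
      rw [h]
    rwa [← mul_assoc, inv_mul_cancel₀ (hcne n), one_mul, mul_comm] at h2
  constructor
  · constructor
    · rintro ⟨u, hu, hsum, m, k, hmk⟩
      have hdiff := key u hu
      have hane : c 0 * (u 1 - u 0) ≠ 0 := by
        intro h0
        apply hmk
        have hconst : ∀ n : ℤ, u n = u 0 := by
          intro n
          induction n using Int.induction_on with
          | zero => rfl
          | succ j ih =>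
            have hd := hdiff j
            rw [h0, zero_mul] at hd
            linarith
          | pred j ih =>
            have hd := hdiff (-(j:ℤ) - 1)
            rw [h0, zero_mul, show (-(j:ℤ) - 1 + 1) = -(j:ℤ) by ring] at hd
            linarith
        rw [hconst m, hconst k]
      have h2 : Summable (fun n : ℤ => (c 0 * (u 1 - u 0)) ^ 2 * (c n)⁻¹) := by
        apply hsum.congr
        intro n
        rw [hdiff n]
        exact aux_sq _ _ (hcne n)
      have h3 := h2.mul_left (((c 0 * (u 1 - u 0)) ^ 2)⁻¹)
      apply h3.congr
      intro n
      rw [← mul_assoc, inv_mul_cancel₀ (pow_ne_zero 2 hane), one_mul]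
    · intro hs
      obtain ⟨u, hu⟩ := exists_antideriv (fun n => (c n)⁻¹)
      refine ⟨u, ?_, ?_, 0, 1, ?_⟩
      · intro n
        have h1 := hu (n - 1)
        rw [show n - 1 + 1 = n by ring] at h1
        rw [h1, hu n, mul_inv_cancel₀ (hcne (n-1)), mul_inv_cancel₀ (hcne n)]
      · apply hs.congr
        intro n
        rw [hu n, show ((c n)⁻¹)^2 = (c n)⁻¹ * (c n)⁻¹ from sq _, ← mul_assoc,
          mul_inv_cancel₀ (hcne n), one_mul]
      · have h1 := hu 0
        norm_num at h1
        intro h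
        rw [h] at h1
        have : (0:ℝ) < (c 0)⁻¹ := inv_pos.mpr (hc 0)
        simp at h1
        rw [← h1] at this
        simp at this
  · intro _ u hu _
    exact ⟨c 0 * (u 1 - u 0), key u hu⟩
end

section
/- On the Pascal graph with all conductances equal to 1, the function h(n,i) = n(n+1)/2 − i(n+1) (with h(0,0) = 0) is a non-constant integer-valued harmonic function satisfying the antisymmetry h(n,i) = −h(n, n−i). -/
/-- The candidate harmonic function on the Pascal graph:
`h(n,i) = n(n+1)/2 - i(n+1)` (an exact integer since `n(n+1)` is even). -/
noncomputable def pascalH (n i : ℕ) : ℤ :=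
  ((n : ℤ) * (n + 1)) / 2 - (i : ℤ) * ((n : ℤ) + 1)

lemma pascal_div2 (m : ℤ) : 2 * (m * (m + 1) / 2) = m * (m + 1) := by
  have h : (2 : ℤ) ∣ m * (m + 1) := (Int.even_mul_succ_self m).two_dvd
  exact Int.two_mul_ediv_two_of_even (Int.even_mul_succ_self m)

/-- on the Pascal graph with all conductances `1`, the function
`h(n,i) = n(n+1)/2 - i(n+1)` is a non-constant integer-valued harmonic function
with the antisymmetry `h(n,i) = -h(n, n-i)`.  Harmonicity is expressed by the
vertex equations at the root, the two boundary rays, and interior vertices. -/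
theorem pascal_harmonic :
    -- harmonic at the root (0,0), whose neighbors are (1,0) and (1,1)
    ((pascalH 0 0 - pascalH 1 0) + (pascalH 0 0 - pascalH 1 1) = 0) ∧
    -- harmonic at the upper boundary vertices (n+1, 0)
    (∀ n : ℕ, 3 * pascalH (n + 1) 0
        - pascalH n 0 - pascalH (n + 2) 0 - pascalH (n + 2) 1 = 0) ∧
    -- harmonic at the lower boundary vertices (n+1, n+1)
    (∀ n : ℕ, 3 * pascalH (n + 1) (n + 1)
        - pascalH n n - pascalH (n + 2) (n + 1) - pascalH (n + 2) (n + 2) = 0) ∧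
    -- harmonic at interior vertices (n, i) with 0 < i < n
    (∀ n i : ℕ, 0 < i → i < n →
      4 * pascalH n i - pascalH (n - 1) (i - 1) - pascalH (n - 1) i
        - pascalH (n + 1) i - pascalH (n + 1) (i + 1) = 0) ∧
    -- antisymmetry h(n,i) = -h(n, n-i)
    (∀ n i : ℕ, i ≤ n → pascalH n i = -pascalH n (n - i)) ∧
    -- non-constant
    (pascalH 1 0 ≠ pascalH 1 1) := by
  refine ⟨by norm_num [pascalH], ?_, ?_, ?_, ?_, by norm_num [pascalH]⟩
  · intro n
    simp only [pascalH]
    push_cast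
    have h1 := pascal_div2 (n : ℤ)
    have h2 := pascal_div2 ((n : ℤ) + 1)
    have h3 := pascal_div2 ((n : ℤ) + 2)
    linarith
  · intro n
    simp only [pascalH]
    push_cast
    have h1 := pascal_div2 (n : ℤ)
    have h2 := pascal_div2 ((n : ℤ) + 1)
    have h3 := pascal_div2 ((n : ℤ) + 2)
    linarith
  · intro n i hi hin
    obtain ⟨j, rfl⟩ := Nat.exists_eq_add_of_lt hi
    obtain ⟨k, rfl⟩ := Nat.exists_eq_add_of_lt hin
    simp only [pascalH, Nat.add_sub_cancel, Nat.zero_add]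
    push_cast
    have h1 := pascal_div2 ((j : ℤ) + 1 + k + 1)
    have h2 := pascal_div2 ((j : ℤ) + 1 + k)
    have h3 := pascal_div2 ((j : ℤ) + 1 + k + 2)
    ring_nf at h1 h2 h3 ⊢
    linarith
  · intro n i h
    simp only [pascalH]
    have : ((n - i : ℕ) : ℤ) = (n : ℤ) - i := by
      omega
    rw [this]
    have h1 := pascal_div2 (n : ℤ)
    linarith
end

section
/- On the weighted stationary Bratteli diagram with d×d invertible symmetric incidence matrix A and conductances c_e = λⁿ for edges in E_n, every harmonic function f = (f_n) satisfies f_{n+1}(x) = f_1(x)·Σ_{i=0}^n λ^{−i} for all x and n ≥ 1 (with f_0 = 0 at the root level). Consequently, if λ > 1, every harmonic function on this diagram is bounded. -/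
/-- on a stationary weighted Bratteli diagram with `d × d`
invertible symmetric incidence matrix `A` and conductances `λⁿ` on level-`n`
edges, every harmonic function `f = (f_n)` (with `f₀ = 0` at the root level)
satisfies `f_{n+1}(x) = f₁(x) Σ_{i=0}^n λ^{-i}`; consequently, if `λ > 1`,
every harmonic function is bounded. -/
theorem stationary_bratteli_harmonic {d : ℕ} (A : Matrix (Fin d) (Fin d) ℝ)
    (hAsym : A.IsSymm) (hAinv : IsUnit A.det)
    (lam : ℝ) (hlam : 0 < lam)
    (f : ℕ → Fin d → ℝ) (hf0 : f 0 = 0)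
    (hharm : ∀ (n : ℕ) (x : Fin d),
      A.transpose.mulVec (f n - f (n + 1) x • (1 : Fin d → ℝ))
        + lam • A.mulVec (f (n + 2) - f (n + 1) x • (1 : Fin d → ℝ)) = 0) :
    (∀ (n : ℕ) (x : Fin d),
      f (n + 1) x = f 1 x * ∑ i ∈ Finset.range (n + 1), (lam⁻¹) ^ i) ∧
    (1 < lam → ∃ M : ℝ, ∀ (n : ℕ) (x : Fin d), |f n x| ≤ M) := by
  have hne : lam ≠ 0 := ne_of_gt hlam
  -- scalar recurrence
  have key : ∀ (n : ℕ) (x : Fin d),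
      f n x + lam * f (n + 2) x = (1 + lam) * f (n + 1) x := by
    intro n x
    have h := hharm n x
    rw [hAsym.eq] at h
    set v : Fin d → ℝ := (f n - f (n+1) x • (1 : Fin d → ℝ))
      + lam • (f (n+2) - f (n+1) x • (1 : Fin d → ℝ)) with hv
    have hAv : A.mulVec v = 0 := by
      rw [hv, Matrix.mulVec_add, Matrix.mulVec_smul]
      exact h
    have hv0 : v = 0 := by
      have := congrArg (A⁻¹.mulVec ·) hAv
      simpa [Matrix.mulVec_mulVec, Matrix.nonsing_inv_mul A hAinv,
        Matrix.one_mulVec, Matrix.mulVec_zero] using this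
    have := congrFun hv0 x
    simp only [hv, Pi.add_apply, Pi.sub_apply, Pi.smul_apply, Pi.one_apply,
      smul_eq_mul, mul_one, Pi.zero_apply] at this
    linarith
  have part1 : ∀ (n : ℕ) (x : Fin d),
      f (n + 1) x = f 1 x * ∑ i ∈ Finset.range (n + 1), (lam⁻¹) ^ i := by
    intro n x
    induction n using Nat.strong_induction_on with
    | _ n ih =>
      match n with
      | 0 => simp
      | 1 =>
        have h0 := key 0 x
        rw [hf0] at h0
        simp only [Pi.zero_apply] at h0
        rw [Finset.sum_range_succ, Finset.sum_range_one]
        have h2 : (2 : ℕ) = 1 + 1 := rfl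
        rw [← h2] at h0 ⊢
        field_simp
        linarith
      | (m + 2) =>
        have h1 := ih (m + 1) (by omega)
        have h0 := ih m (by omega)
        have hk := key (m + 1) x
        simp only [show m + 1 + 2 = m + 3 from rfl, show m + 1 + 1 = m + 2 from rfl] at hk
        rw [h1, h0] at hk
        have hS : ∑ i ∈ Finset.range (m + 3), (lam⁻¹) ^ i
            = ∑ i ∈ Finset.range (m + 2), (lam⁻¹) ^ i + (lam⁻¹) ^ (m + 2) :=
          Finset.sum_range_succ _ _
        have hS2 : ∑ i ∈ Finset.range (m + 2), (lam⁻¹) ^ i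
            = ∑ i ∈ Finset.range (m + 1), (lam⁻¹) ^ i + (lam⁻¹) ^ (m + 1) :=
          Finset.sum_range_succ _ _
        have hpow : lam * (lam⁻¹) ^ (m + 2) = (lam⁻¹) ^ (m + 1) := by
          rw [pow_succ']
          field_simp
        show f (m + 3) x = f 1 x * ∑ i ∈ Finset.range (m + 3), (lam⁻¹) ^ i
        rw [hS]
        have : lam * f (m + 3) x
            = lam * (f 1 x * (∑ i ∈ Finset.range (m + 2), (lam⁻¹) ^ i + (lam⁻¹) ^ (m + 2))) := by
          linear_combination hk + f 1 x * hS2 - f 1 x * hpow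
        exact mul_left_cancel₀ hne this
  refine ⟨part1, fun hl => ?_⟩
  set r := lam⁻¹ with hr
  have hr0 : 0 < r := by positivity
  have hr1 : r < 1 := by
    rw [hr]; exact inv_lt_one_of_one_lt₀ hl
  have h1r : 0 < 1 - r := by linarith
  have hSb : ∀ n : ℕ, ∑ i ∈ Finset.range n, r ^ i ≤ (1 - r)⁻¹ := by
    intro n
    have hm := geom_sum_mul r n
    have hinv : (1 - r) * (1 - r)⁻¹ = 1 := mul_inv_cancel₀ (ne_of_gt h1r)
    have hp : (0 : ℝ) ≤ r ^ n := pow_nonneg hr0.le n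
    nlinarith [hm, hinv, hp, h1r]
  have hSnn : ∀ n : ℕ, 0 ≤ ∑ i ∈ Finset.range n, r ^ i := fun n =>
    Finset.sum_nonneg fun i _ => pow_nonneg hr0.le i
  refine ⟨(∑ x : Fin d, |f 1 x|) * (1 - r)⁻¹, ?_⟩
  have hMnn : 0 ≤ (∑ x : Fin d, |f 1 x|) * (1 - r)⁻¹ :=
    mul_nonneg (Finset.sum_nonneg fun x _ => abs_nonneg _) (inv_nonneg.2 h1r.le)
  intro n x
  cases n with
  | zero => rw [hf0]; simpa using hMnn
  | succ n =>
    rw [part1 n x, abs_mul, abs_of_nonneg (hSnn (n + 1))]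
    exact mul_le_mul (Finset.single_le_sum (fun y _ => abs_nonneg (f 1 y)) (Finset.mem_univ x))
      (hSb (n + 1)) (hSnn (n + 1)) (Finset.sum_nonneg fun y _ => abs_nonneg _)
end
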